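/- Define real polynomials P_{1,m} and P_{2,m} by P_{1,0} = P_{2,0} = 1/2 and, for m ≥ 1, P_{1,m}(z) = z(1−z)·P'_{1,m−1}(z) + m·z·P_{1,m−1}(z) + (1/2)·P_{2,m−1}(z) and P_{2,m}(z) = z(1−z)·P'_{2,m−1}(z) + (m+1)·z·P_{2,m−1}(z) − (1/2)·P_{2,m−1}(z). Then for every integer m ≥ 0 the polynomials P_{1,m} and P_{2,m} have degree m, and for every real z with 0 < z < 1, ∑_{n=0}^∞ 4^n n^m z^n/((2n+1)·C_n) = P_{1,m}(z)/(1−z)^{m+1} + (P_{2,m}(z)/(1−z)^{m+2}) · arctan(√(z/(1−z))) / √(z/(1−z)). -/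

import Mathlib

open Polynomial


lemma natDeg_XX (r : Polynomial ℝ) : (X * (1 - X) * derivative r).natDegree ≤ r.natDegree + 1 := by
  rcases eq_or_ne (derivative r) 0 with h | h
  · simp [h]
  · have h1 : 1 ≤ r.natDegree := by
      by_contra h'
      push_neg at h'
      rw [Nat.lt_one_iff] at h'
      exact h (derivative_of_natDegree_zero h')
    have e1 : (X * (1 - X) : Polynomial ℝ).natDegree ≤ 2 := by
      refine le_trans natDegree_mul_le ?_
      have : (1 - X : Polynomial ℝ).natDegree ≤ 1 := by
        refine le_trans (natDegree_sub_le _ _) ?_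
        simp
      simp only [natDegree_X]; omega
    refine le_trans natDegree_mul_le ?_
    have h2 := natDegree_derivative_le r
    omega

lemma coeff_XX {r : Polynomial ℝ} {m : ℕ} (hr : r.natDegree ≤ m) :
    (X * (1 - X) * derivative r).coeff (m+1) = -(m * r.coeff m) := by
  have e : X * (1 - X) * derivative r = derivative r * X - derivative r * X^2 := by ring
  rw [e, coeff_sub, coeff_mul_X, coeff_mul_X_pow']
  have h0 : (derivative r).coeff m = 0 := by
    rw [coeff_derivative, coeff_eq_zero_of_natDegree_lt (by omega), zero_mul]
  rw [h0]
  rcases Nat.eq_zero_or_pos m with h | h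
  · subst h; simp
  · have h2 : 2 ≤ m + 1 := by omega
    rw [if_pos h2]
    have : m + 1 - 2 = m - 1 := by omega
    rw [this, coeff_derivative]
    have : m - 1 + 1 = m := by omega
    rw [this]
    push_cast [Nat.cast_sub (by omega : 1 ≤ m)]
    ring


/-- The pair of polynomials `(P_{1,m}, P_{2,m})` defined by
`P_{1,0} = P_{2,0} = 1/2` and, for `m ≥ 1`,
`P_{1,m}(z) = z(1-z)·P'_{1,m-1}(z) + m·z·P_{1,m-1}(z) + (1/2)·P_{2,m-1}(z)`,
`P_{2,m}(z) = z(1-z)·P'_{2,m-1}(z) + (m+1)·z·P_{2,m-1}(z) - (1/2)·P_{2,m-1}(z)`. -/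
noncomputable def catalanP : ℕ → Polynomial ℝ × Polynomial ℝ
  | 0 => (C (1 / 2), C (1 / 2))
  | m + 1 =>
      (X * (1 - X) * derivative (catalanP m).1
        + C ((m : ℝ) + 1) * X * (catalanP m).1
        + C (1 / 2) * (catalanP m).2,
       X * (1 - X) * derivative (catalanP m).2
        + C ((m : ℝ) + 2) * X * (catalanP m).2
        - C (1 / 2) * (catalanP m).2)

lemma catalanP_aux (m : ℕ) :
    (catalanP m).1.natDegree ≤ m ∧ (catalanP m).1.coeff m = 1/2 ∧
    (catalanP m).2.natDegree ≤ m ∧ (catalanP m).2.coeff m = 2^m/2 := by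
  induction m with
  | zero => simp [catalanP]
  | succ m ih =>
    obtain ⟨h1, h2, h3, h4⟩ := ih
    have hCX : ∀ (c : ℝ) (r : Polynomial ℝ), r.natDegree ≤ m →
        (C c * X * r).natDegree ≤ m + 1 ∧ (C c * X * r).coeff (m+1) = c * r.coeff m := by
      intro c r hr
      constructor
      · refine le_trans natDegree_mul_le ?_
        refine le_trans (add_le_add natDegree_mul_le hr) ?_
        simp only [natDegree_mul_le, natDegree_C, natDegree_X]
        omega
      · have e : C c * X * r = C c * (r * X) := by ring
        rw [e, coeff_C_mul, coeff_mul_X]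
    have hd1 := natDeg_XX (catalanP m).1
    have hd2 := natDeg_XX (catalanP m).2
    have hc1 := coeff_XX h1
    have hc2 := coeff_XX h3
    obtain ⟨hA1, hA2⟩ := hCX ((m : ℝ) + 1) (catalanP m).1 h1
    obtain ⟨hB1, hB2⟩ := hCX ((m : ℝ) + 2) (catalanP m).2 h3
    have hq1 : (catalanP m).2.coeff (m+1) = 0 := coeff_eq_zero_of_natDegree_lt (by omega)
    have hq1' : (catalanP m).1.coeff (m+1) = 0 := coeff_eq_zero_of_natDegree_lt (by omega)
    have e1 : (catalanP (m+1)).1 = X * (1 - X) * derivative (catalanP m).1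
        + C ((m : ℝ) + 1) * X * (catalanP m).1 + C (1 / 2) * (catalanP m).2 := rfl
    have e2 : (catalanP (m+1)).2 = X * (1 - X) * derivative (catalanP m).2
        + C ((m : ℝ) + 2) * X * (catalanP m).2 - C (1 / 2) * (catalanP m).2 := rfl
    refine ⟨?_, ?_, ?_, ?_⟩
    · rw [e1]
      refine le_trans (natDegree_add_le _ _) ?_
      simp only [sup_le_iff]
      refine ⟨le_trans (natDegree_add_le _ _) ?_, ?_⟩
      · simp only [sup_le_iff]
        refine ⟨le_trans hd1 (by omega), hA1⟩
      · refine le_trans natDegree_mul_le ?_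
        simp only [natDegree_C]
        omega
    · rw [e1, coeff_add, coeff_add, hc1, hA2, coeff_C_mul, hq1, h2]
      ring
    · rw [e2]
      refine le_trans (natDegree_sub_le _ _) ?_
      simp only [sup_le_iff]
      refine ⟨le_trans (natDegree_add_le _ _) ?_, ?_⟩
      · simp only [sup_le_iff]
        refine ⟨le_trans hd2 (by omega), hB1⟩
      · refine le_trans natDegree_mul_le ?_
        simp only [natDegree_C]
        omega
    · rw [e2, coeff_sub, coeff_add, hc2, hB2, coeff_C_mul, hq1, h4]
      ring

lemma catalanP_deg1 (m : ℕ) : (catalanP m).1.degree = m := by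
  obtain ⟨h1, h2, -, -⟩ := catalanP_aux m
  exact degree_eq_of_le_of_coeff_ne_zero (le_trans (degree_le_natDegree) (by exact_mod_cast h1)) (by rw [h2]; norm_num)

lemma catalanP_deg2 (m : ℕ) : (catalanP m).2.degree = m := by
  obtain ⟨-, -, h3, h4⟩ := catalanP_aux m
  refine degree_eq_of_le_of_coeff_ne_zero (le_trans (degree_le_natDegree) (by exact_mod_cast h3)) ?_
  rw [h4]
  positivity

lemma catalan_pos' (n : ℕ) : 0 < catalan n := by
  have h := succ_mul_catalan_eq_centralBinom n
  have hc := Nat.centralBinom_pos n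
  rcases Nat.eq_zero_or_pos (catalan n) with h0 | h0
  · rw [h0, mul_zero] at h; omega
  · exact h0

noncomputable def aa (n : ℕ) : ℝ := 4 ^ n / ((2 * n + 1) * catalan n)

lemma catalan_cast_pos (n : ℕ) : (0:ℝ) < (catalan n : ℝ) := by
  exact_mod_cast catalan_pos' n

lemma den_pos (n : ℕ) : (0:ℝ) < (2 * n + 1) * catalan n := by
  have := catalan_cast_pos n
  positivity

lemma aa_pos (n : ℕ) : 0 < aa n := by
  unfold aa
  have := den_pos n
  positivity

lemma aa_zero : aa 0 = 1 := by simp [aa]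

lemma aa_le (n : ℕ) : aa n ≤ ((n:ℝ) + 1)^2 := by
  have hd := den_pos n
  rw [aa, div_le_iff₀ hd]
  have key : (4:ℝ)^n ≤ ((n:ℝ)+1) * ((2*n+1) * catalan n) := by
    rcases Nat.eq_zero_or_pos n with h | h
    · subst h; simp [catalan_zero]
    · have h1 : (4:ℕ)^n ≤ 2 * n * n.centralBinom := Nat.four_pow_le_two_mul_self_mul_centralBinom n h
      have h2 : (n+1) * catalan n = n.centralBinom := succ_mul_catalan_eq_centralBinom n
      have h3 : (4:ℕ)^n ≤ (n+1) * ((2*n+1) * catalan n) := by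
        calc (4:ℕ)^n ≤ 2 * n * n.centralBinom := h1
          _ = 2 * n * ((n+1) * catalan n) := by rw [h2]
          _ ≤ (n+1) * ((2*n+1) * catalan n) := by nlinarith [catalan_pos' n]
      exact_mod_cast h3
  have hn0 : (0:ℝ) ≤ (n:ℝ) := Nat.cast_nonneg n
  nlinarith [hd, key, mul_nonneg (mul_nonneg hn0 (by linarith : (0:ℝ) ≤ (n:ℝ)+1)) hd.le]

lemma catalan_rec (n : ℕ) : (n + 2) * catalan (n+1) = 2 * (2*n+1) * catalan n := by
  have h1 : (n + 1 + 1) * catalan (n+1) = (n+1).centralBinom := succ_mul_catalan_eq_centralBinom (n+1)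
  have h2 : (n + 1) * (n+1).centralBinom = 2 * (2 * n + 1) * n.centralBinom := Nat.succ_mul_centralBinom_succ n
  have h3 : (n + 1) * catalan n = n.centralBinom := succ_mul_catalan_eq_centralBinom n
  have h4 : (n+1) * ((n+2) * catalan (n+1)) = (n+1) * (2 * (2*n+1) * catalan n) := by
    calc (n+1) * ((n+2) * catalan (n+1)) = (n+1) * (n+1).centralBinom := by rw [← h1]
      _ = 2 * (2*n+1) * n.centralBinom := h2
      _ = 2 * (2*n+1) * ((n+1) * catalan n) := by rw [h3]
      _ = (n+1) * (2 * (2*n+1) * catalan n) := by ring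
  exact Nat.eq_of_mul_eq_mul_left (by omega) h4

lemma aa_rec (n : ℕ) : (2*(n:ℝ)+3) * aa (n+1) = (2*(n:ℝ)+4) * aa n := by
  have hc := catalan_rec n
  have hcr : ((n:ℝ) + 2) * catalan (n+1) = 2 * (2*(n:ℝ)+1) * catalan n := by exact_mod_cast hc
  have h1 := catalan_cast_pos n
  have h2 := catalan_cast_pos (n+1)
  rw [aa, aa]
  push_cast
  rw [mul_div_assoc', mul_div_assoc', div_eq_div_iff (by positivity) (by positivity)]
  linear_combination (-(2*(n:ℝ)+3) * 2 * 4^n) * hcr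

noncomputable def catf (m : ℕ) (z : ℝ) : ℝ := ∑' n : ℕ, aa n * (n:ℝ) ^ m * z ^ n

lemma summable_base (k : ℕ) {r : ℝ} (h0 : 0 ≤ r) (h1 : r < 1) :
    Summable (fun n : ℕ => ((n:ℝ)+1)^2 * (n:ℝ)^k * r^n) := by
  have hr : ‖r‖ < 1 := by rw [Real.norm_eq_abs, abs_of_nonneg h0]; exact h1
  have s1 := summable_pow_mul_geometric_of_norm_lt_one (k+2) hr
  have s2 := summable_pow_mul_geometric_of_norm_lt_one (k+1) hr
  have s3 := summable_pow_mul_geometric_of_norm_lt_one k hr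
  have s4 := (s1.add ((s2.mul_left 2))).add s3
  refine s4.congr ?_
  intro n
  push_cast
  ring

lemma summable_term (m : ℕ) {z r : ℝ} (hz : |z| ≤ r) (hr : r < 1) :
    Summable (fun n : ℕ => aa n * (n:ℝ)^m * z^n) := by
  have h0 : 0 ≤ r := le_trans (abs_nonneg z) hz
  refine Summable.of_norm ?_
  refine Summable.of_nonneg_of_le (fun n => norm_nonneg _) ?_ (summable_base m h0 hr)
  intro n
  rw [Real.norm_eq_abs, abs_mul, abs_mul, abs_pow, abs_pow, abs_of_pos (aa_pos n), abs_of_nonneg (Nat.cast_nonneg n : (0:ℝ) ≤ n)]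
  gcongr <;> first | exact aa_le n | exact hz | exact abs_nonneg z | exact (aa_pos n).le

lemma summable_term' (m : ℕ) {z r : ℝ} (hz0 : 0 ≤ z) (hz : z ≤ r) (h0 : 0 < r) (hr : r < 1) :
    Summable (fun n : ℕ => aa n * (n:ℝ)^m * ((n:ℝ) * z^(n-1))) := by
  refine Summable.of_norm ?_
  have hbase : Summable (fun n : ℕ => ((n:ℝ)+1)^2 * (n:ℝ)^(m+1) * r^n / r) :=
    ((summable_base (m+1) h0.le hr).div_const r)
  refine Summable.of_nonneg_of_le (fun n => norm_nonneg _) ?_ hbase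
  intro n
  rw [Real.norm_eq_abs, abs_mul, abs_mul, abs_mul, abs_pow, abs_pow,
    abs_of_pos (aa_pos n), abs_of_nonneg (Nat.cast_nonneg n : (0:ℝ) ≤ n),
    abs_of_nonneg hz0]
  rcases Nat.eq_zero_or_pos n with h | h
  · subst h
    simp
  · have e1 : r ^ n = r^(n-1) * r := by
      rw [← pow_succ]
      congr 1
      omega
    rw [e1]
    have e3 : ((n:ℝ)+1)^2 * (n:ℝ)^(m+1) * (r^(n-1) * r) / r = ((n:ℝ)+1)^2 * (n:ℝ)^(m+1) * r^(n-1) := by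
      field_simp
    rw [e3]
    have e2 : aa n * (n:ℝ)^m * ((n:ℝ) * z^(n-1)) = aa n * (n:ℝ)^(m+1) * z^(n-1) := by ring
    rw [e2]
    gcongr <;> first | exact aa_le n | exact hz | exact hz0 | exact (aa_pos n).le

lemma hasDerivAt_catf (m : ℕ) {z : ℝ} (h0 : 0 < z) (h1 : z < 1) :
    HasDerivAt (catf m) (∑' n : ℕ, aa n * (n:ℝ)^m * ((n:ℝ) * z^(n-1))) z := by
  set r := (z+1)/2 with hr
  have hr0 : 0 < r := by rw [hr]; linarith
  have hr1 : r < 1 := by rw [hr]; linarith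
  have hzr : z < r := by rw [hr]; linarith
  have hu : Summable (fun n : ℕ => aa n * (n:ℝ)^m * ((n:ℝ) * r^(n-1))) :=
    summable_term' m hr0.le le_rfl hr0 hr1
  have goal := hasDerivAt_tsum_of_isPreconnected (𝕜 := ℝ) (F := ℝ)
    (g := fun (n : ℕ) (y : ℝ) => aa n * (n:ℝ)^m * y^n)
    (g' := fun (n : ℕ) (y : ℝ) => aa n * (n:ℝ)^m * ((n:ℝ) * y^(n-1)))
    (t := Set.Ioo 0 r) (y₀ := z) (y := z)
    (u := fun n : ℕ => aa n * (n:ℝ)^m * ((n:ℝ) * r^(n-1)))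
    hu (isOpen_Ioo) (convex_Ioo 0 r).isPreconnected
    (fun n y hy => by
      have h := (hasDerivAt_pow n y).const_mul (aa n * (n:ℝ)^m)
      simpa [mul_assoc] using h)
    (fun n y hy => by
      obtain ⟨hy0, hy1⟩ := Set.mem_Ioo.1 hy
      simp only [Real.norm_eq_abs, abs_mul, abs_pow, abs_of_pos (aa_pos n),
        abs_of_nonneg (Nat.cast_nonneg n : (0:ℝ) ≤ n), abs_of_nonneg hy0.le]
      gcongr <;> first | exact mul_nonneg (aa_pos n).le (by positivity) | exact hy0.le | exact hy1.le | positivity)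
    (Set.mem_Ioo.2 ⟨h0, hzr⟩)
    (summable_term m (by rw [abs_of_pos h0]; exact hzr.le) hr1)
    (Set.mem_Ioo.2 ⟨h0, hzr⟩)
  exact goal

noncomputable def catA (z : ℝ) : ℝ := Real.arctan (Real.sqrt (z / (1-z))) / Real.sqrt (z / (1-z))

lemma hasDerivAt_catA {z : ℝ} (h0 : 0 < z) (h1 : z < 1) :
    HasDerivAt catA (1/(2*z) - catA z / (2*z*(1-z))) z := by
  have hz1 : (0:ℝ) < 1 - z := by linarith
  have hne : (1:ℝ) - z ≠ 0 := ne_of_gt hz1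
  have hw_pos : 0 < z / (1-z) := div_pos h0 hz1
  set s := Real.sqrt (z / (1-z)) with hs_def
  have hs_pos : 0 < s := Real.sqrt_pos.2 hw_pos
  have hs_ne : s ≠ 0 := ne_of_gt hs_pos
  have hs2 : s^2 = z / (1-z) := Real.sq_sqrt hw_pos.le
  have hw : HasDerivAt (fun z : ℝ => z/(1-z)) (1/(1-z)^2) z := by
    have h := (hasDerivAt_id z).div ((hasDerivAt_id z).const_sub 1) hne
    exact h.congr_deriv (by simp only [id]; congr 1; ring)
  have hsD : HasDerivAt (fun z : ℝ => Real.sqrt (z/(1-z))) (1/(2*s) * (1/(1-z)^2)) z := by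
    have h := (Real.hasDerivAt_sqrt (ne_of_gt hw_pos)).comp z hw
    exact h
  have harD : HasDerivAt (fun z : ℝ => Real.arctan (Real.sqrt (z/(1-z))))
      (1/(1+s^2) * (1/(2*s) * (1/(1-z)^2))) z := by
    have h := (Real.hasDerivAt_arctan s).comp z hsD
    exact h
  have harb : 1 + z/(1-z) = 1/(1-z) := by field_simp; ring
  have key : ∀ S u : ℝ, S ≠ 0 → S^2 = z/(1-z) →
      (1/(1+S^2) * (1/(2*S) * (1/(1-z)^2)) * S - u * (1/(2*S) * (1/(1-z)^2))) / S^2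
        = 1/(2*z) - (u/S)/(2*z*(1-z)) := by
    intro S u hS h2
    rw [h2, harb]
    have hz0 : z ≠ 0 := ne_of_gt h0
    field_simp
  have h := harD.div hsD hs_ne
  exact h.congr_deriv (key s (Real.arctan s) hs_ne hs2)

noncomputable def catR (m : ℕ) (z : ℝ) : ℝ :=
  eval z (catalanP m).1 / (1-z)^(m+1) + eval z (catalanP m).2 / (1-z)^(m+2) * catA z

noncomputable def catR' (m : ℕ) (z : ℝ) : ℝ :=
  ((1-z) * eval z (derivative (catalanP m).1) + ((m:ℝ)+1) * eval z (catalanP m).1) / (1-z)^(m+2)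
  + (((1-z) * eval z (derivative (catalanP m).2) + ((m:ℝ)+2) * eval z (catalanP m).2) / (1-z)^(m+3)) * catA z
  + eval z (catalanP m).2 / (1-z)^(m+2) * (1/(2*z) - catA z/(2*z*(1-z)))

lemma hasDerivAt_catR (m : ℕ) {z : ℝ} (h0 : 0 < z) (h1 : z < 1) :
    HasDerivAt (catR m) (catR' m z) z := by
  have hz1 : (0:ℝ) < 1 - z := by linarith
  have hne : (1:ℝ) - z ≠ 0 := ne_of_gt hz1
  have hq1 : HasDerivAt (fun z : ℝ => (1-z)^(m+1)) (((m:ℝ)+1) * (1-z)^m * (-1)) z := by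
    have h := (((hasDerivAt_id z).const_sub 1)).pow (m+1)
    simp at h
    exact h.congr_deriv (by ring)
  have hq2 : HasDerivAt (fun z : ℝ => (1-z)^(m+2)) (((m:ℝ)+2) * (1-z)^(m+1) * (-1)) z := by
    have h := (((hasDerivAt_id z).const_sub 1)).pow (m+2)
    norm_num at h ⊢
    exact h
  have hp1 : HasDerivAt (fun z : ℝ => eval z (catalanP m).1) (eval z (derivative (catalanP m).1)) z :=
    Polynomial.hasDerivAt _ z
  have hp2 : HasDerivAt (fun z : ℝ => eval z (catalanP m).2) (eval z (derivative (catalanP m).2)) z :=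
    Polynomial.hasDerivAt _ z
  have hA := hasDerivAt_catA h0 h1
  have h := (hp1.div hq1 (pow_ne_zero _ hne)).add ((hp2.div hq2 (pow_ne_zero _ hne)).mul hA)
  refine h.congr_deriv ?_
  rw [catR']
  simp only [Pi.div_apply]
  have hP : (1 - z) ^ m ≠ 0 := pow_ne_zero _ hne
  simp only [pow_succ, pow_add] at *
  generalize (1 - z) ^ m = P at *
  field_simp
  ring

lemma catR_step (m : ℕ) {z : ℝ} (h0 : 0 < z) (h1 : z < 1) :
    z * catR' m z = catR (m+1) z := by
  have hz1 : (0:ℝ) < 1 - z := by linarith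
  have hne : (1:ℝ) - z ≠ 0 := ne_of_gt hz1
  have hz0 : z ≠ 0 := ne_of_gt h0
  have e1 : (catalanP (m+1)).1 = X * (1 - X) * derivative (catalanP m).1
      + C ((m : ℝ) + 1) * X * (catalanP m).1 + C (1 / 2) * (catalanP m).2 := rfl
  have e2 : (catalanP (m+1)).2 = X * (1 - X) * derivative (catalanP m).2
      + C ((m : ℝ) + 2) * X * (catalanP m).2 - C (1 / 2) * (catalanP m).2 := rfl
  rw [catR', catR, e1, e2]
  simp only [eval_add, eval_sub, eval_mul, eval_X, eval_C, eval_one]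
  push_cast
  field_simp
  ring

lemma catR0_ode {z : ℝ} (h0 : 0 < z) (h1 : z < 1) :
    2*z*(1-z) * catR' 0 z + (1-4*z) * catR 0 z = 1 := by
  have hz1 : (0:ℝ) < 1 - z := by linarith
  have hne : (1:ℝ) - z ≠ 0 := ne_of_gt hz1
  have hz0 : z ≠ 0 := ne_of_gt h0
  have e1 : (catalanP 0).1 = C (1/2 : ℝ) := rfl
  have e2 : (catalanP 0).2 = C (1/2 : ℝ) := rfl
  rw [catR', catR, e1, e2]
  simp only [eval_C, derivative_C, eval_zero]
  norm_num
  field_simp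
  ring

lemma catf0_ode {z : ℝ} (h0 : 0 < z) (h1 : z < 1) :
    2*z*(1-z) * (∑' n : ℕ, aa n * (n:ℝ)^0 * ((n:ℝ) * z^(n-1))) + (1-4*z) * catf 0 z = 1 := by
  have hzabs : |z| ≤ z := by rw [abs_of_pos h0]
  have S0 : Summable (fun n : ℕ => aa n * (n:ℝ)^0 * z^n) := summable_term 0 hzabs h1
  have S1 : Summable (fun n : ℕ => aa n * (n:ℝ)^1 * z^n) := summable_term 1 hzabs h1
  have S' : Summable (fun n : ℕ => aa n * (n:ℝ)^0 * ((n:ℝ) * z^(n-1))) :=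
    summable_term' 0 h0.le le_rfl h0 h1
  set c : ℕ → ℝ := fun n => (2*(n:ℝ)+1) * aa n * z^n with hc
  have Sc : Summable c := by
    refine (((S1.mul_left 2)).add S0).congr ?_
    intro n
    simp [hc]
    ring
  set S := ∑' n, c n with hS
  have hcsum : HasSum c S := Sc.hasSum
  have h2 : HasSum (fun n => c (n+1)) (S - c 0) := by
    rw [hasSum_nat_add_iff 1]
    simpa using hcsum
  have h3 : HasSum (fun n => c n - c (n+1)) (S - (S - c 0)) := hcsum.sub h2
  set T := catf 0 z with hT
  set T' := ∑' n : ℕ, aa n * (n:ℝ)^0 * ((n:ℝ) * z^(n-1)) with hT'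
  have hTsum : HasSum (fun n : ℕ => aa n * (n:ℝ)^0 * z^n) T := S0.hasSum
  have hT'sum : HasSum (fun n : ℕ => aa n * (n:ℝ)^0 * ((n:ℝ) * z^(n-1))) T' := S'.hasSum
  have hL : HasSum (fun n : ℕ => 2*z*(1-z) * (aa n * (n:ℝ)^0 * ((n:ℝ) * z^(n-1)))
      + (1-4*z) * (aa n * (n:ℝ)^0 * z^n)) (2*z*(1-z) * T' + (1-4*z) * T) :=
    (hT'sum.mul_left _).add (hTsum.mul_left _)
  have hterm : ∀ n : ℕ, 2*z*(1-z) * (aa n * (n:ℝ)^0 * ((n:ℝ) * z^(n-1)))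
      + (1-4*z) * (aa n * (n:ℝ)^0 * z^n) = c n - c (n+1) := by
    intro n
    cases n with
    | zero =>
      have hr := aa_rec 0
      simp only [hc]
      push_cast at hr ⊢
      norm_num at hr ⊢
      linear_combination z * hr
    | succ k =>
      have hr := aa_rec (k+1)
      simp only [hc, Nat.succ_sub_one]
      push_cast at hr ⊢
      linear_combination (z^(k+2)) * hr
  have h4 : HasSum (fun n : ℕ => 2*z*(1-z) * (aa n * (n:ℝ)^0 * ((n:ℝ) * z^(n-1)))
      + (1-4*z) * (aa n * (n:ℝ)^0 * z^n)) (S - (S - c 0)) := by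
    refine h3.congr_fun ?_
    intro n
    exact hterm n
  have h5 := hL.unique h4
  rw [h5]
  simp only [hc]
  rw [aa_zero]
  norm_num

lemma catA_pos {z : ℝ} (h0 : 0 < z) (h1 : z < 1) : 0 < catA z := by
  have hw : 0 < z / (1-z) := div_pos h0 (by linarith)
  have hs : 0 < Real.sqrt (z/(1-z)) := Real.sqrt_pos.2 hw
  have harc : 0 < Real.arctan (Real.sqrt (z/(1-z))) := by
    have := Real.arctan_strictMono hs
    rwa [Real.arctan_zero] at this
  exact div_pos harc hs

lemma catA_le_one {z : ℝ} (h0 : 0 < z) (h1 : z < 1) : catA z ≤ 1 := by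
  have hw : 0 < z / (1-z) := div_pos h0 (by linarith)
  have hs : 0 < Real.sqrt (z/(1-z)) := Real.sqrt_pos.2 hw
  set s := Real.sqrt (z/(1-z))
  have harc0 : 0 ≤ Real.arctan s := by
    have := Real.arctan_strictMono hs
    rw [Real.arctan_zero] at this
    linarith
  have harc : Real.arctan s ≤ s := by
    have h2 : Real.arctan s ≤ Real.tan (Real.arctan s) :=
      Real.le_tan harc0 (Real.arctan_lt_pi_div_two s)
    rwa [Real.tan_arctan] at h2
  rw [catA, div_le_one hs]
  exact harc

noncomputable def catM : ℝ := ∑' n : ℕ, ((n:ℝ)+1)^2 * (n:ℝ)^0 * (1/2:ℝ)^n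

lemma catM_nonneg : 0 ≤ catM := tsum_nonneg (fun n => by positivity)

lemma catf0_bound {z : ℝ} (h0 : 0 < z) (h2 : z < 1/2) : |catf 0 z| ≤ catM := by
  have hz1 : z < 1 := by linarith
  have hS := summable_term 0 (le_refl |z|) (by rw [abs_of_pos h0]; linarith)
  have hnn : ∀ n : ℕ, 0 ≤ aa n * (n:ℝ)^0 * z^n := fun n => by
    have := aa_pos n
    positivity
  rw [catf, abs_of_nonneg (tsum_nonneg hnn)]
  refine Summable.tsum_le_tsum ?_ hS (summable_base 0 (by norm_num) (by norm_num))
  intro n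
  have h1 : z^n ≤ (1/2:ℝ)^n := pow_le_pow_left₀ h0.le h2.le n
  have h2' : aa n ≤ ((n:ℝ)+1)^2 := aa_le n
  have := aa_pos n
  have hz : (0:ℝ) ≤ z^n := by positivity
  nlinarith [pow_nonneg (by norm_num : (0:ℝ) ≤ 1/2) n]

lemma catR0_bound {z : ℝ} (h0 : 0 < z) (h2 : z < 1/2) : |catR 0 z| ≤ 3 := by
  have hz1 : (0:ℝ) < 1 - z := by linarith
  have e1 : (catalanP 0).1 = C (1/2 : ℝ) := rfl
  have e2 : (catalanP 0).2 = C (1/2 : ℝ) := rfl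
  have hA0 := catA_pos h0 (by linarith)
  have hA1 := catA_le_one h0 (by linarith)
  rw [catR, e1, e2]
  simp only [eval_C]
  have t1 : 1/2/(1-z)^(0+1) ≤ 1 := by
    rw [div_le_one (by positivity)]
    simp
    linarith
  have t2 : 1/2/(1-z)^(0+2) ≤ 2 := by
    rw [div_le_iff₀ (by positivity)]
    nlinarith
  have t3 : (0:ℝ) < 1/2/(1-z)^(0+1) := by positivity
  have t4 : (0:ℝ) < 1/2/(1-z)^(0+2) := by positivity
  rw [abs_le]
  constructor
  · nlinarith
  · nlinarith

lemma catf_eq_catR_zero {z : ℝ} (h0 : 0 < z) (h1 : z < 1) : catf 0 z = catR 0 z := by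
  set G : ℝ → ℝ := fun y => Real.sqrt y * (Real.sqrt (1-y) * (1-y)) * (catf 0 y - catR 0 y)
    with hGdef
  have hGderiv : ∀ y ∈ Set.Ioo (0:ℝ) 1, HasDerivAt G 0 y := by
    rintro y ⟨hy0, hy1⟩
    have hy1' : (0:ℝ) < 1 - y := by linarith
    have hf := hasDerivAt_catf 0 hy0 hy1
    have hR := hasDerivAt_catR 0 hy0 hy1
    have hD := hf.sub hR
    have hsq : HasDerivAt Real.sqrt (1/(2*Real.sqrt y)) y := Real.hasDerivAt_sqrt (ne_of_gt hy0)
    have h1y : HasDerivAt (fun y : ℝ => 1 - y) (-1) y := by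
      simpa using (hasDerivAt_id y).const_sub 1
    have hsq1 : HasDerivAt (fun y : ℝ => Real.sqrt (1-y)) (1/(2*Real.sqrt (1-y)) * (-1)) y := by
      have h := (Real.hasDerivAt_sqrt (ne_of_gt hy1')).comp y h1y
      exact h
    have hb : HasDerivAt (fun y : ℝ => Real.sqrt (1-y) * (1-y))
        ((1/(2*Real.sqrt (1-y)) * (-1)) * (1-y) + Real.sqrt (1-y) * (-1)) y := hsq1.mul h1y
    have hμ := hsq.mul hb
    have hGd := hμ.mul hD
    refine hGd.congr_deriv ?_
    set a := Real.sqrt y with hadef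
    set b := Real.sqrt (1-y) with hbdef
    have ha : 0 < a := Real.sqrt_pos.2 hy0
    have hbp : 0 < b := Real.sqrt_pos.2 hy1'
    have ha2 : a^2 = y := Real.sq_sqrt hy0.le
    have hb2 : b^2 = 1-y := Real.sq_sqrt hy1'.le
    have hab : a^2 + b^2 = 1 := by rw [ha2, hb2]; ring
    have hode1 := catf0_ode hy0 hy1
    have hode2 := catR0_ode hy0 hy1
    set T' := ∑' n : ℕ, aa n * (n:ℝ)^0 * ((n:ℝ) * y^(n-1)) with hT'
    set F := catf 0 y with hF
    set Rv := catR 0 y with hRv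
    set R' := catR' 0 y with hR'
    have hsub : 2*y*(1-y)*(T' - R') + (1-4*y)*(F - Rv) = 0 := by
      linear_combination hode1 - hode2
    have hkey : 2*y*(1-y) * (1/(2*a)*(b*(1-y)) + a*((1/(2*b)*(-1))*(1-y) + b*(-1)))
        = (1-4*y) * (a*(b*(1-y))) := by
      have e0 : (1:ℝ) - y = b^2 := hb2.symm
      have ey : y = a^2 := ha2.symm
      rw [e0]
      rw [ey]
      field_simp
      linear_combination hab
    have hmain : 2*y*(1-y) * ((1/(2*a)*(b*(1-y)) + a*((1/(2*b)*(-1))*(1-y) + b*(-1))) * (F - Rv)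
        + a*(b*(1-y)) * (T' - R')) = 0 := by
      linear_combination (F - Rv) * hkey + (a*(b*(1-y))) * hsub
    have hyne : 2*y*(1-y) ≠ 0 := by positivity
    rcases mul_eq_zero.1 hmain with h | h
    · exact absurd h hyne
    · exact h
  have hconst : ∀ y ∈ Set.Ioo (0:ℝ) 1, G y = G z := by
    intro y hy
    refine Convex.is_const_of_fderivWithin_eq_zero (𝕜 := ℝ) (convex_Ioo 0 1) ?_ ?_ hy ⟨h0, h1⟩
    · intro x hx
      exact ((hGderiv x hx).differentiableAt).differentiableWithinAt
    · intro x hx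
      rw [fderivWithin_of_isOpen isOpen_Ioo hx, (hGderiv x hx).hasFDerivAt.fderiv]
      ext t
      simp
  have hmem : Set.Ioo (0:ℝ) (1/2) ∈ nhdsWithin 0 (Set.Ioi 0) :=
    Ioo_mem_nhdsGT_of_mem ⟨le_refl 0, by norm_num⟩
  have hbound : ∀ᶠ y in nhdsWithin (0:ℝ) (Set.Ioi 0), ‖G y‖ ≤ Real.sqrt y * (catM + 3) := by
    filter_upwards [hmem] with y hy
    obtain ⟨hy0, hy2⟩ := hy
    have hy1' : (0:ℝ) < 1 - y := by linarith
    have hb1 : Real.sqrt (1-y) * (1-y) ≤ 1 := by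
      have h1 : Real.sqrt (1-y) ≤ 1 := Real.sqrt_le_one.2 (by linarith)
      nlinarith [Real.sqrt_nonneg (1-y)]
    have hb0 : 0 ≤ Real.sqrt (1-y) * (1-y) := by positivity
    have hDb : |catf 0 y - catR 0 y| ≤ catM + 3 := by
      have := catf0_bound hy0 hy2
      have := catR0_bound hy0 hy2
      calc |catf 0 y - catR 0 y| ≤ |catf 0 y| + |catR 0 y| := abs_sub _ _
        _ ≤ catM + 3 := by linarith
    rw [hGdef]
    simp only [Real.norm_eq_abs]
    rw [abs_mul, abs_mul, abs_of_nonneg (Real.sqrt_nonneg y), abs_of_nonneg hb0]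
    calc Real.sqrt y * (Real.sqrt (1-y)*(1-y)) * |catf 0 y - catR 0 y|
        ≤ Real.sqrt y * 1 * (catM + 3) := by
          gcongr <;> first | exact Real.sqrt_nonneg y | exact hb1 | exact hDb | positivity
      _ = Real.sqrt y * (catM + 3) := by ring
  have htend0 : Filter.Tendsto (fun y : ℝ => Real.sqrt y * (catM+3))
      (nhdsWithin 0 (Set.Ioi 0)) (nhds 0) := by
    have h1 : Filter.Tendsto Real.sqrt (nhds 0) (nhds 0) := by
      have := Real.continuous_sqrt.tendsto 0
      simpa using this
    have h2 : Filter.Tendsto Real.sqrt (nhdsWithin (0:ℝ) (Set.Ioi 0)) (nhds 0) :=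
      h1.mono_left (nhdsWithin_le_nhds (s := Set.Ioi (0:ℝ)))
    have := h2.mul_const (catM+3)
    simpa using this
  have hG0 : Filter.Tendsto G (nhdsWithin (0:ℝ) (Set.Ioi 0)) (nhds 0) :=
    squeeze_zero_norm' hbound htend0
  have hGconst : Filter.Tendsto G (nhdsWithin (0:ℝ) (Set.Ioi 0)) (nhds (G z)) := by
    have heq : G =ᶠ[nhdsWithin (0:ℝ) (Set.Ioi 0)] fun _ => G z := by
      filter_upwards [Ioo_mem_nhdsGT_of_mem ⟨le_refl (0:ℝ), one_pos⟩] with y hy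
      exact hconst y hy
    rw [Filter.tendsto_congr' heq]
    exact tendsto_const_nhds
  have hGz : G z = 0 := tendsto_nhds_unique hGconst hG0
  rw [hGdef] at hGz
  simp only at hGz
  have hμpos : 0 < Real.sqrt z * (Real.sqrt (1-z) * (1-z)) :=
    mul_pos (Real.sqrt_pos.2 h0) (mul_pos (Real.sqrt_pos.2 (by linarith)) (by linarith))
  rcases mul_eq_zero.1 hGz with h | h
  · exact absurd h (ne_of_gt hμpos)
  · linarith [sub_eq_zero.1 h]

lemma catf_eq_catR (m : ℕ) : ∀ {z : ℝ}, 0 < z → z < 1 → catf m z = catR m z := by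
  induction m with
  | zero => exact fun h0 h1 => catf_eq_catR_zero h0 h1
  | succ m ih =>
    intro z h0 h1
    have hf := hasDerivAt_catf m h0 h1
    have hR := hasDerivAt_catR m h0 h1
    have heq : catR m =ᶠ[nhds z] catf m := by
      filter_upwards [isOpen_Ioo.mem_nhds (Set.mem_Ioo.2 ⟨h0, h1⟩ : z ∈ Set.Ioo (0:ℝ) 1)] with y hy
      exact (ih hy.1 hy.2).symm
    have hf' : HasDerivAt (catR m) (∑' n : ℕ, aa n * (n:ℝ)^m * ((n:ℝ) * z^(n-1))) z :=
      hf.congr_of_eventuallyEq heq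
    have huniq : (∑' n : ℕ, aa n * (n:ℝ)^m * ((n:ℝ) * z^(n-1))) = catR' m z := hf'.unique hR
    have hstep : catf (m+1) z = z * (∑' n : ℕ, aa n * (n:ℝ)^m * ((n:ℝ) * z^(n-1))) := by
      rw [catf, ← tsum_mul_left]
      refine tsum_congr fun n => ?_
      cases n with
      | zero => simp
      | succ k =>
        rw [Nat.succ_sub_one]
        push_cast
        ring
    rw [hstep, huniq, catR_step m h0 h1]

/-- Theorem 5 of the paper: `P_{1,m}` and `P_{2,m}` have degree `m`, and for
`0 < z < 1`,
`∑_{n=0}^∞ 4^n n^m z^n/((2n+1)·C_n)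
  = P_{1,m}(z)/(1-z)^{m+1} + (P_{2,m}(z)/(1-z)^{m+2})·arctan(√(z/(1-z)))/√(z/(1-z))`. -/
theorem g_m_closed_form (m : ℕ) :
    (catalanP m).1.degree = m ∧ (catalanP m).2.degree = m ∧
    ∀ z : ℝ, 0 < z → z < 1 →
      ∑' n : ℕ, 4 ^ n * (n : ℝ) ^ m * z ^ n / ((2 * (n : ℝ) + 1) * (catalan n : ℝ))
        = ((catalanP m).1.eval z) / (1 - z) ^ (m + 1)
          + ((catalanP m).2.eval z) / (1 - z) ^ (m + 2)
            * (Real.arctan (Real.sqrt (z / (1 - z))) / Real.sqrt (z / (1 - z))) := by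
  refine ⟨catalanP_deg1 m, catalanP_deg2 m, ?_⟩
  intro z hz0 hz1
  have e : ∑' n : ℕ, 4 ^ n * (n : ℝ) ^ m * z ^ n / ((2 * (n : ℝ) + 1) * (catalan n : ℝ))
      = catf m z := by
    rw [catf]
    exact tsum_congr fun n => by rw [aa]; ring
  rw [e, catf_eq_catR m hz0 hz1, catR, catA]
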